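/- Let $U, V$ be positive random variables whose ratio $U/V \geq 1$ has Laplace transform $\mathbb{E} e^{-\lambda U/V} = \frac{e^{-\lambda}}{1 + \frac{\alpha}{2}\int_0^1 \frac{1 - e^{-\lambda u}}{u^{\alpha/2+1}} du}$ for all $\lambda > 0$, where $\alpha \in (0,2)$. Then for every $\varepsilon \in (0, 1/2)$, $\mathbb{P}\left( \frac{V}{U} \geq (1-\varepsilon)^2 \right) > 0$. -/

import Mathlib

open MeasureTheory ProbabilityTheory

set_option maxHeartbeats 1600000 in
/-- Let `U, V` be positive random variables with `V ≤ U`, whose ratio `U/V` has Laplace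
transform `E e^{-λ U/V} = e^{-λ} / (1 + (α/2) ∫₀¹ (1 - e^{-λu}) u^{-α/2-1} du)` for all
`λ > 0`, where `α ∈ (0,2)`.  Then `P(V/U ≥ (1-ε)²) > 0` for every `ε ∈ (0, 1/2)`. -/
theorem stmt16 {Ω : Type*} [MeasurableSpace Ω] (P : Measure Ω) [IsProbabilityMeasure P]
    (α : ℝ) (hα : α ∈ Set.Ioo (0 : ℝ) 2)
    (U V : Ω → ℝ) (hU : Measurable U) (hV : Measurable V)
    (hpos : ∀ᵐ ω ∂P, 0 < V ω ∧ V ω ≤ U ω)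
    (hlap : ∀ lam : ℝ, 0 < lam →
      ∫ ω, Real.exp (-lam * (U ω / V ω)) ∂P =
        Real.exp (-lam) /
          (1 + (α / 2) *
            ∫ u in Set.Ioc (0 : ℝ) 1, (1 - Real.exp (-lam * u)) / u ^ (α / 2 + 1)))
    (ε : ℝ) (hε : ε ∈ Set.Ioo (0 : ℝ) (1 / 2)) :
    0 < P {ω | (1 - ε) ^ 2 ≤ V ω / U ω} := by
  obtain ⟨hα0, hα2⟩ := hα
  obtain ⟨hε0, hε2⟩ := hε
  have he1 : (0:ℝ) < 1 - ε := by linarith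
  have hsq : (0:ℝ) < (1 - ε)^2 := by positivity
  have hsqlt : (1 - ε)^2 < 1 := by nlinarith
  set r : ℝ := ((1 - ε)^2)⁻¹ with hr
  have hr1 : 1 < r := one_lt_inv₀ hsq |>.mpr hsqlt
  set δ : ℝ := r - 1 with hδ
  have hδ0 : 0 < δ := by simp only [hδ]; linarith
  set c : ℝ := (α/2) / (1 - α/2) with hc
  have hc0 : 0 < c := by apply div_pos <;> linarith
  by_contra hcon
  push_neg at hcon
  have hS0 : P {ω | (1 - ε) ^ 2 ≤ V ω / U ω} = 0 := le_antisymm hcon zero_le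
  have hae : ∀ᵐ ω ∂P, V ω / U ω < (1 - ε)^2 := by
    rw [ae_iff]
    convert hS0 using 2
    ext ω
    simp [not_lt]
  -- key inequality
  have key : ∀ lam : ℝ, 0 < lam → Real.exp (lam * δ) ≤ 1 + c * lam := by
    intro lam hlam
    set J : ℝ := ∫ u in Set.Ioc (0:ℝ) 1, (1 - Real.exp (-lam * u)) / u ^ (α/2 + 1) with hJ
    have hgint : IntegrableOn (fun u : ℝ => lam * u ^ (-(α/2))) (Set.Ioc (0:ℝ) 1) := by
      exact ((intervalIntegral.intervalIntegrable_rpow' (a := 0) (b := 1)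
        (r := -(α/2)) (by linarith)).1.const_mul lam)
    have hbound : ∀ u ∈ Set.Ioc (0:ℝ) 1,
        (1 - Real.exp (-lam * u)) / u ^ (α/2 + 1) ≤ lam * u ^ (-(α/2)) := by
      intro u hu
      have hu0 : 0 < u := hu.1
      have hup : (0:ℝ) < u ^ (α/2 + 1) := Real.rpow_pos_of_pos hu0 _
      have h1 : 1 - Real.exp (-lam * u) ≤ lam * u := by
        have := Real.add_one_le_exp (-lam * u)
        linarith
      have h2 : (1 - Real.exp (-lam * u)) / u ^ (α/2 + 1) ≤ lam * u / u ^ (α/2 + 1) :=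
        div_le_div_of_nonneg_right h1 hup.le
      refine h2.trans_eq ?_
      rw [mul_div_assoc]
      congr 1
      rw [div_eq_iff hup.ne', ← Real.rpow_add hu0]
      norm_num
    have hfint : IntegrableOn (fun u : ℝ => (1 - Real.exp (-lam * u)) / u ^ (α/2 + 1))
        (Set.Ioc (0:ℝ) 1) := by
      refine Integrable.mono' hgint ?_ ?_
      · apply Measurable.aestronglyMeasurable
        fun_prop
      · rw [ae_restrict_iff' measurableSet_Ioc]
        filter_upwards with u hu
        have hu0 := hu.1
        rw [Real.norm_eq_abs, abs_of_nonneg]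
        · exact hbound u hu
        · apply div_nonneg
          · have : Real.exp (-lam * u) ≤ 1 := by
              rw [Real.exp_le_one_iff]
              nlinarith
            linarith
          · exact (Real.rpow_pos_of_pos hu0 _).le
    have hJ0 : 0 ≤ J := by
      apply setIntegral_nonneg measurableSet_Ioc
      intro u hu
      apply div_nonneg
      · have : Real.exp (-lam * u) ≤ 1 := by
          rw [Real.exp_le_one_iff]; nlinarith [hu.1]
        linarith
      · exact (Real.rpow_pos_of_pos hu.1 _).le
    have hJle : J ≤ lam * (1/(1 - α/2)) := by
      have h1 : J ≤ ∫ u in Set.Ioc (0:ℝ) 1, lam * u ^ (-(α/2)) :=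
        setIntegral_mono_on hfint hgint measurableSet_Ioc hbound
      have h2 : ∫ u in Set.Ioc (0:ℝ) 1, lam * u ^ (-(α/2))
          = lam * (1/(1 - α/2)) := by
        rw [← intervalIntegral.integral_of_le (by norm_num : (0:ℝ) ≤ 1)]
        rw [intervalIntegral.integral_const_mul]
        rw [integral_rpow (Or.inl (by linarith))]
        rw [Real.one_rpow, Real.zero_rpow (by linarith)]
        ring_nf
      linarith [h1, h2 ▸ h1]
    -- a.e. bound on exp(-lam U/V)
    have haeb : ∀ᵐ ω ∂P, ‖Real.exp (-lam * (U ω / V ω))‖ ≤ Real.exp (-lam * r) := by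
      filter_upwards [hpos, hae] with ω hω hlt
      obtain ⟨hV0, hVU⟩ := hω
      have hU0 : 0 < U ω := lt_of_lt_of_le hV0 hVU
      have hrle : r ≤ U ω / V ω := by
        rw [hr]
        have hVU0 : 0 < V ω / U ω := div_pos hV0 hU0
        have : ((1 - ε)^2)⁻¹ ≤ (V ω / U ω)⁻¹ := by
          apply inv_anti₀ hVU0 hlt.le
        rwa [inv_div] at this
      rw [Real.norm_eq_abs, abs_of_pos (Real.exp_pos _), Real.exp_le_exp]
      nlinarith
    have hintle : ∫ ω, Real.exp (-lam * (U ω / V ω)) ∂P ≤ Real.exp (-lam * r) := by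
      have := norm_integral_le_of_norm_le_const haeb
      simp only [probReal_univ, ENNReal.toReal_one, mul_one] at this
      calc ∫ ω, Real.exp (-lam * (U ω / V ω)) ∂P
          ≤ ‖∫ ω, Real.exp (-lam * (U ω / V ω)) ∂P‖ := le_abs_self _
        _ ≤ Real.exp (-lam * r) := this
    have heq := hlap lam hlam
    rw [heq] at hintle
    have hD1 : (1:ℝ) ≤ 1 + (α/2) * J := by nlinarith
    have hDle : 1 + (α/2) * J ≤ 1 + c * lam := by
      have : (α/2) * J ≤ (α/2) * (lam * (1/(1 - α/2))) := by
        apply mul_le_mul_of_nonneg_left hJle (by linarith)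
      have hne : (1 - α/2) ≠ 0 := by linarith
      have h4 : (4:ℝ) - α*2 ≠ 0 := by linarith
      have h5 : (2:ℝ) - α ≠ 0 := by linarith
      have hceq : (α/2) * (lam * (1/(1 - α/2))) = c * lam := by
        rw [hc]; field_simp
      linarith
    -- exp(-lam) ≤ exp(-lam r) * (1 + c lam)
    have h3 : Real.exp (-lam) ≤ Real.exp (-lam * r) * (1 + c * lam) := by
      have h4 : Real.exp (-lam) / (1 + (α/2) * J) ≤ Real.exp (-lam * r) := hintle
      have h5 : Real.exp (-lam) ≤ Real.exp (-lam * r) * (1 + (α/2) * J) := by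
        rw [div_le_iff₀ (by linarith)] at h4
        linarith
      have h6 : Real.exp (-lam * r) * (1 + (α/2) * J) ≤ Real.exp (-lam * r) * (1 + c * lam) :=
        mul_le_mul_of_nonneg_left hDle (Real.exp_pos _).le
      linarith
    have h7 : Real.exp (lam * δ) = Real.exp (-lam) / Real.exp (-lam * r) := by
      rw [← Real.exp_sub]
      congr 1
      simp only [hδ]; ring
    rw [h7, div_le_iff₀ (Real.exp_pos _)]
    calc Real.exp (-lam) ≤ Real.exp (-lam * r) * (1 + c * lam) := h3
      _ = (1 + c * lam) * Real.exp (-lam * r) := by ring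
  -- now derive contradiction
  clear_value r δ c
  clear hr hδ hc hS0 hcon hae hlap hpos
  obtain ⟨lam, hlam1, hlam2⟩ : ∃ lam : ℝ, 1 ≤ lam ∧ 4*c/δ^2 ≤ lam :=
    ⟨max 1 (4*c/δ^2), le_max_left _ _, le_max_right _ _⟩
  have hlam0 : 0 < lam := by linarith
  have hk := key lam hlam0
  have hquad : (1 + lam*δ/2)^2 ≤ Real.exp (lam*δ) := by
    have h1 : 1 + lam*δ/2 ≤ Real.exp (lam*δ/2) := by
      have := Real.add_one_le_exp (lam*δ/2); linarith
    have h2 : (0:ℝ) ≤ 1 + lam*δ/2 := by positivity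
    calc (1 + lam*δ/2)^2 ≤ Real.exp (lam*δ/2)^2 := by nlinarith [Real.exp_pos (lam*δ/2)]
      _ = Real.exp (lam*δ) := by
        rw [sq, ← Real.exp_add]
        congr 1
        ring
  have hδ2 : (0:ℝ) < δ^2 := by positivity
  have h8' : 4*c ≤ lam * δ^2 := (div_le_iff₀ hδ2).mp hlam2
  have h8 : c * lam ≤ lam^2 * δ^2 / 4 := by nlinarith
  have hfin : 1 + c*lam < (1 + lam*δ/2)^2 := by
    have hexp : (1 + lam*δ/2)^2 = 1 + lam*δ + lam^2*δ^2/4 := by ring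
    have hpp := mul_pos hlam0 hδ0
    rw [hexp]
    linarith
  linarith
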